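/- Let 𝔄 be an excellent based A-algebra, 𝐜 a two-sided cell of I, and a the common value of the a-function on 𝐜 (the a-function is constant on two-sided cells by Q3). Let r ≥ 1 and (i_1, i_2, …, i_r) ∈ I^r, and write b_{i_1} b_{i_2} ⋯ b_{i_r} = Σ_{i∈I, k∈ℤ} N(i,k) v^k b_i with N(i,k) ∈ ℤ. Then: if i ∈ 𝐜 and N(i,k) ≠ 0 then k ≥ −(r−1)a; and if i ∈ 𝐜 and N(i, −(r−1)a) ≠ 0 then i_u ∈ 𝐜 for all u ∈ {1,…,r}. -/

import Mathlib

open scoped Classical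
open Finset

noncomputable section

/-- The ring `A = ℤ[v,v⁻¹]` of Laurent polynomials over `ℤ`. -/
abbrev LP : Type := LaurentPolynomial ℤ

/-- The coefficient of `v^n` in a Laurent polynomial. -/
def lcoeff (f : LP) (n : ℤ) : ℤ := (f.coeff : ℤ →₀ ℤ) n

/-- A based `A`-algebra (Lusztig, 1.9), encoded by its structure constants
`h i i' j` (the coefficient of `b j` in `b i * b i'`), the coordinates `e i` of the
unit element, the involution `einv` of the index set (written `i ↦ i^!`), and the
distinguished subset `I0` of `{i | i^! = i}`. -/
structure BasedAlgebra (I : Type) [Fintype I] [DecidableEq I] where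
  h : I → I → I → LP
  e : I → LP
  einv : I → I
  I0 : Finset I
  einv_invol : ∀ i, einv (einv i) = i
  mul_assoc' : ∀ i j k l, ∑ m, h i j m * h m k l = ∑ m, h j k m * h i m l
  one_mul' : ∀ j k, ∑ i, e i * h i j k = if j = k then 1 else 0
  mul_one' : ∀ j k, ∑ i, e i * h j i k = if j = k then 1 else 0
  anti' : ∀ i i' j, h (einv i) (einv i') (einv j) = h i' i j
  I0_fixed : ∀ i ∈ I0, einv i = i

namespace BasedAlgebra

variable {I : Type} [Fintype I] [DecidableEq I]

/-- The preorder `⪯_left` on `I`, generated by: `j ⪯_left i` if `h i' i j ≠ 0` for some `i'`. -/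
def leLeft (B : BasedAlgebra I) : I → I → Prop :=
  Relation.ReflTransGen (fun j i => ∃ i', B.h i' i j ≠ 0)

/-- The preorder `⪯` on `I`, generated by:
`j ⪯ i` if `h i i' j ≠ 0` or `h i' i j ≠ 0` for some `i'`. -/
def leTwo (B : BasedAlgebra I) : I → I → Prop :=
  Relation.ReflTransGen (fun j i => ∃ i', B.h i i' j ≠ 0 ∨ B.h i' i j ≠ 0)

/-- The equivalence relation `∼_left` whose classes are the left cells. -/
def simLeft (B : BasedAlgebra I) (i j : I) : Prop := B.leLeft i j ∧ B.leLeft j i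

/-- The equivalence relation `∼` whose classes are the two-sided cells. -/
def simTwo (B : BasedAlgebra I) (i j : I) : Prop := B.leTwo i j ∧ B.leTwo j i

/-- `c` is a left cell. -/
def IsLeftCell (B : BasedAlgebra I) (c : Set I) : Prop := ∃ i, c = {j | B.simLeft j i}

/-- `c` is a two-sided cell. -/
def IsTwoCell (B : BasedAlgebra I) (c : Set I) : Prop := ∃ i, c = {j | B.simTwo j i}

/-- Lusztig's `a`-function: `a j` is the smallest `m : ℕ` such that
`h i i' j ∈ v^{-m} ℤ[v]` for all `i, i'`. -/
def af (B : BasedAlgebra I) (j : I) : ℕ :=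
  sInf {m : ℕ | ∀ i i' : I, ∀ n : ℤ, n < -(m : ℤ) → lcoeff (B.h i i' j) n = 0}

/-- The leading coefficients: `h i i' (j^!) = (hstar i i' j) v^{-a(j^!)} +` higher powers. -/
def hstar (B : BasedAlgebra I) (i i' j : I) : ℤ :=
  lcoeff (B.h i i' (B.einv j)) (-(B.af (B.einv j) : ℤ))

/-- The based algebra is *excellent* if properties Q1–Q11 of Lusztig (1.9) hold. -/
structure Excellent (B : BasedAlgebra I) : Prop where
  q1 : ∀ j ∈ B.I0, ∀ i i', B.hstar i i' j ≠ 0 → i' = B.einv i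
  q2 : ∀ i, ∃! j, j ∈ B.I0 ∧ B.hstar (B.einv i) i j ≠ 0
  q3 : ∀ i' i, B.leTwo i' i → B.af i ≤ B.af i'
  q4 : ∀ j ∈ B.I0, ∀ i, B.hstar (B.einv i) i j ≠ 0 → B.hstar (B.einv i) i j = 1
  q5 : ∀ i j k, B.hstar i j k = B.hstar j k i
  q6 : ∀ i j k, B.hstar i j k ≠ 0 →
    B.simLeft i (B.einv j) ∧ B.simLeft j (B.einv k) ∧ B.simLeft k (B.einv i)
  q7 : ∀ i' i, B.leLeft i' i → B.af i' = B.af i → B.simLeft i' i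
  q8 : ∀ i' i, B.leTwo i' i → B.af i' = B.af i → B.simTwo i' i
  q9a : ∀ i, ∃! j, j ∈ B.I0 ∧ B.simLeft j i
  q9b : ∀ i j, j ∈ B.I0 → B.simLeft j i → B.hstar (B.einv i) i j = 1
  q10 : ∀ i, B.simTwo i (B.einv i)
  q11 : ∀ i i' j k, B.af j = B.af k → ∀ p q : ℤ,
    ∑ j', lcoeff (B.h k i' j') p * lcoeff (B.h i j' j) q
      = ∑ j', lcoeff (B.h i k j') q * lcoeff (B.h j' i' j) p

/-- The multiplication of the asymptotic ring `𝔄^∞`, on coordinates with respect to the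
basis `{t_i}`: `t_i t_{i'} = ∑_j h*_{i,i',j^!} t_j`. -/
def tmul (B : BasedAlgebra I) (x y : I → ℤ) : I → ℤ :=
  fun j => ∑ i, ∑ i', x i * y i' * B.hstar i i' (B.einv j)

/-- The element `∑_{i ∈ I₀} t_i` of `𝔄^∞`. -/
def tone (B : BasedAlgebra I) : I → ℤ := fun i => if i ∈ B.I0 then 1 else 0

/-- The basis element `t_i` of `𝔄^∞`. -/
def tbasis (B : BasedAlgebra I) (i : I) : I → ℤ := fun j => if j = i then 1 else 0

end BasedAlgebra

namespace BasedAlgebra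

variable {I : Type} [Fintype I] [DecidableEq I]

/-- The coordinates of the basis element `b_i` of `𝔄`. -/
def bvec (_B : BasedAlgebra I) (i : I) : I → LP := fun j => if j = i then 1 else 0

/-- Multiplication of `𝔄`, on coordinates with respect to the basis `{b_i}`. -/
def amul (B : BasedAlgebra I) (x y : I → LP) : I → LP :=
  fun j => ∑ i, ∑ i', x i * y i' * B.h i i' j

/-- The product `b_{f 0} b_{f 1} ⋯ b_{f (n-1)}` in `𝔄`, on coordinates. -/
def aprod (B : BasedAlgebra I) (f : ℕ → I) : ℕ → (I → LP)
  | 0 => B.e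
  | n + 1 => B.amul (B.aprod f n) (B.bvec (f n))

end BasedAlgebra

section Aux

theorem lcoeff_sum' {α : Type} (g : α → LP) (s : Finset α) (n : ℤ) :
    lcoeff (∑ x ∈ s, g x) n = ∑ x ∈ s, lcoeff (g x) n := by
  simp only [lcoeff, AddMonoidAlgebra.coeff_sum]; exact Finset.sum_apply' n

theorem lcoeff_mul' (p q : LP) (k : ℤ) (h : lcoeff (p*q) k ≠ 0) :
    ∃ m, lcoeff p m ≠ 0 ∧ lcoeff q (k-m) ≠ 0 := by
  rw [lcoeff, AddMonoidAlgebra.mul_apply, Finsupp.sum] at h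
  obtain ⟨a, ha, h2⟩ := Finset.exists_ne_zero_of_sum_ne_zero h
  rw [Finsupp.sum] at h2
  obtain ⟨b, hb, h3⟩ := Finset.exists_ne_zero_of_sum_ne_zero h2
  refine ⟨a, Finsupp.mem_support_iff.mp ha, ?_⟩
  by_cases hab : a + b = k
  · rw [if_pos hab] at h3
    have hkb : k - a = b := by omega
    rw [lcoeff, hkb]
    intro hq; rw [hq, mul_zero] at h3; exact h3 rfl
  · rw [if_neg hab] at h3; exact absurd rfl h3

theorem lcoeff_zero' (k : ℤ) : lcoeff 0 k = 0 := rfl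

theorem lcoeff_one' (k : ℤ) (h : lcoeff 1 k ≠ 0) : k = 0 := by
  rw [lcoeff, AddMonoidAlgebra.one_def, AddMonoidAlgebra.coeff_single] at h
  by_contra hk
  exact h (Finsupp.single_eq_of_ne (fun h' => hk h'))

namespace BasedAlgebra

variable {I : Type} [Fintype I] [DecidableEq I] (B : BasedAlgebra I)

theorem af_spec (j : I) : ∀ i i' : I, ∀ n : ℤ, n < -(B.af j : ℤ) →
    lcoeff (B.h i i' j) n = 0 := by
  have hmem : B.af j ∈ {m : ℕ | ∀ i i' : I, ∀ n : ℤ, n < -(m : ℤ) → lcoeff (B.h i i' j) n = 0} := by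
    apply Nat.sInf_mem
    refine ⟨Finset.univ.sup (fun p : I × I => ((B.h p.1 p.2 j).coeff).support.sup
      (fun n => n.natAbs)), ?_⟩
    intro i i' n hn
    by_contra hne
    have hsupp : n ∈ ((B.h i i' j).coeff).support := Finsupp.mem_support_iff.mpr hne
    have h1 : n.natAbs ≤ ((B.h i i' j).coeff).support.sup (fun n => n.natAbs) :=
      Finset.le_sup hsupp
    have h2 : ((B.h i i' j).coeff).support.sup (fun n => n.natAbs) ≤
        Finset.univ.sup (fun p : I × I => ((B.h p.1 p.2 j).coeff).support.sup
          (fun n => n.natAbs)) :=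
      Finset.le_sup (f := fun p : I × I => ((B.h p.1 p.2 j).coeff).support.sup
        (fun n => n.natAbs)) (Finset.mem_univ (i, i'))
    omega
  exact hmem

theorem leLeft_le_leTwo {i j : I} (h : B.leLeft i j) : B.leTwo i j :=
  Relation.ReflTransGen.mono (fun _ _ ⟨i', hi⟩ => ⟨i', Or.inr hi⟩) _ _ h

theorem simTwo_refl (i : I) : B.simTwo i i :=
  ⟨Relation.ReflTransGen.refl, Relation.ReflTransGen.refl⟩

theorem simTwo_symm {i j : I} (h : B.simTwo i j) : B.simTwo j i := ⟨h.2, h.1⟩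

theorem simTwo_trans {i j k : I} (h : B.simTwo i j) (h' : B.simTwo j k) : B.simTwo i k :=
  ⟨h.1.trans h'.1, h'.2.trans h.2⟩

theorem simTwo_of_simLeft {i j : I} (h : B.simLeft i j) : B.simTwo i j :=
  ⟨B.leLeft_le_leTwo h.1, B.leLeft_le_leTwo h.2⟩

theorem leTwo_of_h {i i' j : I} (h : B.h i i' j ≠ 0) : B.leTwo j i ∧ B.leTwo j i' :=
  ⟨Relation.ReflTransGen.single ⟨i', Or.inl h⟩, Relation.ReflTransGen.single ⟨i, Or.inr h⟩⟩

theorem aprod_succ (f : ℕ → I) (n : ℕ) (j : I) :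
    B.aprod f (n+1) j = ∑ i, B.aprod f n i * B.h i (f n) j := by
  show B.amul (B.aprod f n) (B.bvec (f n)) j = _
  unfold amul bvec
  refine Finset.sum_congr rfl (fun i _ => ?_)
  rw [Finset.sum_eq_single (f n)]
  · simp
  · intro b _ hb; simp [hb]
  · intro hb; exact absurd (Finset.mem_univ _) hb

theorem aprod_one (f : ℕ → I) (j : I) :
    B.aprod f 1 j = if f 0 = j then 1 else 0 := by
  rw [B.aprod_succ f 0 j]
  exact B.one_mul' (f 0) j

variable {B} (hB : B.Excellent)
include hB

/-- The lower bound: coefficients of `b_{f 0} ⋯ b_{f n}` on `b_j` live in degrees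
`≥ -n·a(j)`. -/
theorem lemA (f : ℕ → I) : ∀ n : ℕ, ∀ j : I, ∀ k : ℤ,
    lcoeff (B.aprod f (n+1) j) k ≠ 0 → -(n : ℤ) * (B.af j : ℤ) ≤ k := by
  intro n
  induction n with
  | zero =>
    intro j k hk
    rw [B.aprod_one] at hk
    by_cases hfj : f 0 = j
    · rw [if_pos hfj] at hk
      simp [lcoeff_one' k hk]
    · rw [if_neg hfj] at hk
      exact absurd (lcoeff_zero' k) hk
  | succ n ih =>
    intro j k hk
    rw [B.aprod_succ f (n+1) j, lcoeff_sum'] at hk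
    obtain ⟨i, _, hi⟩ := Finset.exists_ne_zero_of_sum_ne_zero hk
    obtain ⟨m, hm1, hm2⟩ := lcoeff_mul' _ _ _ hi
    have hpoly : B.h i (f (n+1)) j ≠ 0 := fun e => hm2 (by rw [e]; exact lcoeff_zero' _)
    have hle : B.af i ≤ B.af j := hB.q3 j i (B.leTwo_of_h hpoly).1
    have hm : -(n : ℤ) * (B.af i : ℤ) ≤ m := ih i m hm1
    have hkm : -(B.af j : ℤ) ≤ k - m := by
      by_contra hcon
      exact hm2 (B.af_spec j i (f (n+1)) (k - m) (not_le.mp hcon))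
    have hmul : (n : ℤ) * (B.af i : ℤ) ≤ (n : ℤ) * (B.af j : ℤ) :=
      mul_le_mul_of_nonneg_left (by exact_mod_cast hle) (by positivity)
    push_cast
    linarith

/-- Attainment of the bound forces all factors into the two-sided cell of `j`. -/
theorem lemB (f : ℕ → I) : ∀ n : ℕ, ∀ j : I,
    lcoeff (B.aprod f (n+1) j) (-(n : ℤ) * (B.af j : ℤ)) ≠ 0 →
    ∀ u ≤ n, B.simTwo (f u) j := by
  intro n
  induction n with
  | zero =>
    intro j hk u hu
    rw [B.aprod_one] at hk
    by_cases hfj : f 0 = j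
    · interval_cases u
      rw [hfj]; exact B.simTwo_refl j
    · rw [if_neg hfj] at hk
      exact absurd (lcoeff_zero' _) hk
  | succ n ih =>
    intro j hk u hu
    rw [B.aprod_succ f (n+1) j, lcoeff_sum'] at hk
    obtain ⟨i, _, hi⟩ := Finset.exists_ne_zero_of_sum_ne_zero hk
    obtain ⟨m, hm1, hm2⟩ := lcoeff_mul' _ _ _ hi
    have hpoly : B.h i (f (n+1)) j ≠ 0 := fun e => hm2 (by rw [e]; exact lcoeff_zero' _)
    have hle : B.af i ≤ B.af j := hB.q3 j i (B.leTwo_of_h hpoly).1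
    have hm : -(n : ℤ) * (B.af i : ℤ) ≤ m := lemA hB f n i m hm1
    have hkm : -(B.af j : ℤ) ≤ -(↑(n+1) : ℤ) * (B.af j : ℤ) - m := by
      by_contra hcon
      exact hm2 (B.af_spec j i (f (n+1)) _ (not_le.mp hcon))
    have hmul : (n : ℤ) * (B.af i : ℤ) ≤ (n : ℤ) * (B.af j : ℤ) :=
      mul_le_mul_of_nonneg_left (by exact_mod_cast hle) (by positivity)
    have hmeq : m = -(n : ℤ) * (B.af i : ℤ) := by push_cast at hkm ⊢; linarith
    have hkmeq : -(↑(n+1) : ℤ) * (B.af j : ℤ) - m = -(B.af j : ℤ) := by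
      push_cast at hkm ⊢; linarith
    -- `hstar i (f (n+1)) (einv j) ≠ 0`
    have hst : B.hstar i (f (n+1)) (B.einv j) ≠ 0 := by
      unfold hstar
      rw [B.einv_invol]
      rw [hkmeq] at hm2
      exact hm2
    obtain ⟨s1, s2, s3⟩ := hB.q6 _ _ _ hst
    rw [B.einv_invol] at s2
    have hfn1 : B.simTwo (f (n+1)) j := B.simTwo_of_simLeft s2
    have hij : B.simTwo i j := by
      have t : B.simTwo (B.einv j) (B.einv i) := B.simTwo_of_simLeft s3
      exact B.simTwo_trans (hB.q10 i) (B.simTwo_trans (B.simTwo_symm t)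
        (B.simTwo_symm (hB.q10 j)))
    rcases Nat.lt_or_ge u (n+1) with hu' | hu'
    · have hfu : B.simTwo (f u) i := by
        apply ih i _ u (by omega)
        rw [← hmeq]; exact hm1
      exact B.simTwo_trans hfu hij
    · have : u = n + 1 := by omega
      rw [this]; exact hfn1

end BasedAlgebra

end Aux

/-- Lusztig 1.10(a). Let `𝐜` be a two-sided cell of an excellent based
`A`-algebra with `a`-function constant equal to `a₀` on `𝐜`. Write
`b_{i_1} ⋯ b_{i_r} = ∑_{i,k} N(i,k) v^k b_i` (here `r = r₀ + 1 ≥ 1` and `i_u = f (u-1)`).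
If `i ∈ 𝐜` and `N(i,k) ≠ 0` then `k ≥ -(r-1)a₀`; and if `i ∈ 𝐜` and
`N(i, -(r-1)a₀) ≠ 0` then `i_u ∈ 𝐜` for all `u`. -/
theorem statement6 {I : Type} [Fintype I] [DecidableEq I]
    (B : BasedAlgebra I) (hB : B.Excellent)
    (c : Set I) (hc : B.IsTwoCell c) (a0 : ℕ) (ha0 : ∀ i ∈ c, B.af i = a0)
    (r0 : ℕ) (f : ℕ → I) :
    (∀ i ∈ c, ∀ k : ℤ, lcoeff (B.aprod f (r0 + 1) i) k ≠ 0 → -((r0 : ℤ) * (a0 : ℤ)) ≤ k) ∧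
    (∀ i ∈ c, lcoeff (B.aprod f (r0 + 1) i) (-((r0 : ℤ) * (a0 : ℤ))) ≠ 0 →
      ∀ u ≤ r0, f u ∈ c) := by
  obtain ⟨i0, hi0⟩ := hc
  constructor
  · intro i hi k hk
    have := BasedAlgebra.lemA hB f r0 i k hk
    rw [ha0 i hi] at this
    linarith
  · intro i hi hk u hu
    have hfu : B.simTwo (f u) i := by
      apply BasedAlgebra.lemB hB f r0 i _ u hu
      rw [ha0 i hi]
      convert hk using 2
      ring
    have hii0 : B.simTwo i i0 := by rw [hi0] at hi; exact hi
    rw [hi0]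
    exact B.simTwo_trans hfu hii0
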